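/- Let C₁ > 0 and C₂ > 0. Set ξ_p := (C₁ + √(C₁² + 4C₂²))/2, ψ(u) := C₂√(u(C₁−u)) / (π(C₂² + u(C₁−u))) for u ∈ (0,C₁), and r := 2C₂√(ξ_p(ξ_p−C₁)) / (2ξ_p − C₁). Then for every real ξ > ξ_p, C₂/(√(ξ(ξ−C₁)) − C₂) = ∫₀^{C₁} ψ(u)/(ξ−u) du + r/(ξ − ξ_p). (Integral representation of the JKD permeability function.) -/

import Mathlib

set_option maxHeartbeats 1000000

open Real Set


/-- The pole location ξ_p of the JKD function R^D. -/
noncomputable def xip (C₁ C₂ : ℝ) : ℝ := (C₁ + Real.sqrt (C₁ ^ 2 + 4 * C₂ ^ 2)) / 2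

/-- The density ψ of the absolutely continuous part of the JKD representing measure. -/
noncomputable def psi (C₁ C₂ u : ℝ) : ℝ :=
  C₂ * Real.sqrt (u * (C₁ - u)) / (Real.pi * (C₂ ^ 2 + u * (C₁ - u)))

/-- The strength r of the Dirac mass at ξ_p. -/
noncomputable def rres (C₁ C₂ : ℝ) : ℝ :=
  2 * C₂ * Real.sqrt (xip C₁ C₂ * (xip C₁ C₂ - C₁)) / (2 * xip C₁ C₂ - C₁)


noncomputable def FF (C₁ a q x : ℝ) : ℝ :=
  -Real.sqrt (x*(C₁-x)) + (a - C₁/2) * Real.arcsin ((2*x-C₁)/C₁)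
    - q * Real.arcsin (((2*a-C₁)*x - a*C₁)/(C₁*(a-x)))

lemma FF_sub {C₁ a q : ℝ} (hC₁ : 0 < C₁) (ha : a ≠ 0) (haC : a ≠ C₁) :
    FF C₁ a q C₁ - FF C₁ a q 0 = Real.pi * (a - C₁/2 - q) := by
  have h0 : ((2*a-C₁)*0 - a*C₁)/(C₁*(a-0)) = -1 := by
    rw [mul_zero, zero_sub, sub_zero]
    rw [div_eq_iff (mul_ne_zero hC₁.ne' ha)]; ring
  have h1 : ((2*a-C₁)*C₁ - a*C₁)/(C₁*(a-C₁)) = 1 := by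
    rw [div_eq_one_iff_eq (mul_ne_zero hC₁.ne' (sub_ne_zero.mpr haC))]; ring
  have h2 : (2*C₁-C₁)/C₁ = 1 := by
    rw [div_eq_one_iff_eq hC₁.ne']; ring
  have h3 : (2*(0:ℝ)-C₁)/C₁ = -1 := by
    rw [div_eq_iff hC₁.ne']; ring
  simp only [FF, h0, h1, h2, h3, Real.arcsin_one, Real.arcsin_neg_one, sub_self,
    mul_zero, zero_mul, Real.sqrt_zero, sub_zero, zero_sub, mul_neg]
  rw [show -C₁/C₁ = -(1:ℝ) by rw [div_eq_iff hC₁.ne']; ring,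
      show -(a*C₁)/(C₁*a) = -(1:ℝ) by rw [div_eq_iff (mul_ne_zero hC₁.ne' ha)]; ring,
      Real.arcsin_neg_one]
  ring

lemma FF_cont {C₁ a q : ℝ} (hC₁ : 0 < C₁) (ha : ∀ x ∈ Set.Icc (0:ℝ) C₁, a - x ≠ 0) :
    ContinuousOn (FF C₁ a q) (Set.Icc 0 C₁) := by
  unfold FF
  apply ContinuousOn.sub
  · apply ContinuousOn.add
    · exact ((Real.continuous_sqrt.comp (by continuity)).continuousOn).neg
    · apply ContinuousOn.mul continuousOn_const
      exact Real.continuous_arcsin.comp_continuousOn (Continuous.continuousOn (by continuity))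
  · apply ContinuousOn.mul continuousOn_const
    apply Real.continuous_arcsin.comp_continuousOn
    apply ContinuousOn.div (Continuous.continuousOn (by continuity))
      (Continuous.continuousOn (by continuity))
    exact fun x hx => mul_ne_zero hC₁.ne' (ha x hx)

lemma FF_deriv {C₁ a q u : ℝ} (hC₁ : 0 < C₁) (hq : q^2 = a*(a-C₁)) (hqa : 0 < q*a)
    (hu0 : 0 < u) (huC : u < C₁) :
    HasDerivAt (FF C₁ a q) (Real.sqrt (u*(C₁-u))/(a-u)) u := by
  have hq0 : q ≠ 0 := by rintro rfl; simp at hqa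
  have ha0 : a ≠ 0 := by rintro rfl; simp at hqa
  have haapos : 0 < a*(a-C₁) := by rw [← hq]; positivity
  have hau : 0 < q*(a-u) := by
    rcases lt_trichotomy a 0 with h|h|h
    · have hqneg : q < 0 := by nlinarith
      nlinarith
    · exact absurd h ha0
    · have hqpos : 0 < q := by nlinarith
      have : C₁ < a := by nlinarith
      nlinarith
  have haune : a - u ≠ 0 := by
    intro h; rw [h, mul_zero] at hau; exact lt_irrefl 0 hau
  set w := Real.sqrt (u*(C₁-u)) with hw
  have hwpos : 0 < w := Real.sqrt_pos.mpr (by nlinarith)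
  have hw2 : w^2 = u*(C₁-u) := Real.sq_sqrt (by nlinarith)
  have hinner1 : HasDerivAt (fun x : ℝ => x*(C₁-x)) (C₁-2*u) u := by
    have := (hasDerivAt_id u).mul ((hasDerivAt_const u C₁).sub (hasDerivAt_id u))
    refine this.congr_deriv (Eq.symm ?_); simp [id]; ring
  have hp1 : HasDerivAt (fun x : ℝ => Real.sqrt (x*(C₁-x)))
      (1/(2*w) * (C₁-2*u)) u :=
    (Real.hasDerivAt_sqrt (by nlinarith)).comp u hinner1
  have hinner2 : HasDerivAt (fun x : ℝ => (2*x-C₁)/C₁) (2/C₁) u := by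
    have : HasDerivAt (fun x : ℝ => 2*x-C₁) 2 u := by
      simpa using ((hasDerivAt_id u).const_mul 2).sub_const C₁
    simpa using this.div_const C₁
  have hv1 : (2*u-C₁)/C₁ ≠ -1 := by
    intro h
    have := (div_eq_iff (ne_of_gt hC₁)).mp h
    nlinarith
  have hv2 : (2*u-C₁)/C₁ ≠ 1 := by
    intro h
    have := (div_eq_iff (ne_of_gt hC₁)).mp h
    nlinarith
  have hs1 : Real.sqrt (1 - ((2*u-C₁)/C₁)^2) = 2*w/C₁ := by
    have h12 : 1 - ((2*u-C₁)/C₁)^2 = (2*w/C₁)^2 := by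
      field_simp
      linear_combination (-4)*hw2
    rw [h12, Real.sqrt_sq (by positivity)]
  have hp2 : HasDerivAt (fun x : ℝ => Real.arcsin ((2*x-C₁)/C₁))
      (1/(2*w/C₁) * (2/C₁)) u := by
    have := (Real.hasDerivAt_arcsin hv1 hv2).comp u hinner2
    rwa [hs1] at this
  have hdenne : C₁*(a-u) ≠ 0 := mul_ne_zero (ne_of_gt hC₁) haune
  have hnum : HasDerivAt (fun x : ℝ => (2*a-C₁)*x - a*C₁) (2*a-C₁) u := by
    simpa using ((hasDerivAt_id u).const_mul (2*a-C₁)).sub_const (a*C₁)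
  have hden : HasDerivAt (fun x : ℝ => C₁*(a-x)) (-C₁) u := by
    have : HasDerivAt (fun x : ℝ => a - x) (-1) u := by
      simpa using (hasDerivAt_id u).const_sub a
    have := this.const_mul C₁
    refine this.congr_deriv (Eq.symm ?_); ring
  have hinner3 : HasDerivAt (fun x : ℝ => ((2*a-C₁)*x - a*C₁)/(C₁*(a-x)))
      (((2*a-C₁)*(C₁*(a-u)) - ((2*a-C₁)*u - a*C₁)*(-C₁)) / (C₁*(a-u))^2) u :=
    hnum.div hden hdenne
  set hval := ((2*a-C₁)*u - a*C₁)/(C₁*(a-u)) with hhval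
  have key : (C₁*(a-u))^2 - ((2*a-C₁)*u - a*C₁)^2 = 4*(q^2)*(w^2) := by
    rw [hq, hw2]; ring
  have hqau : 0 < q/(a-u) := by
    rcases mul_pos_iff.mp hau with ⟨h1,h2⟩|⟨h1,h2⟩
    · exact div_pos h1 h2
    · exact div_pos_of_neg_of_neg h1 h2
  have h1m : 1 - hval^2 = (2*q*w/(C₁*(a-u)))^2 := by
    rw [hhval]
    field_simp
    linear_combination key
  have h1mpos : 0 < 1 - hval^2 := by
    rw [h1m]
    have : 2*q*w/(C₁*(a-u)) = 2*w/C₁ * (q/(a-u)) := by field_simp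
    positivity
  have hh1 : hval ≠ -1 := by intro h; rw [h] at h1mpos; norm_num at h1mpos
  have hh2 : hval ≠ 1 := by intro h; rw [h] at h1mpos; norm_num at h1mpos
  have hs3 : Real.sqrt (1 - hval^2) = 2*q*w/(C₁*(a-u)) := by
    rw [h1m, Real.sqrt_sq]
    have : 2*q*w/(C₁*(a-u)) = 2*w/C₁ * (q/(a-u)) := by field_simp
    rw [this]; positivity
  have hp3 : HasDerivAt (fun x : ℝ => Real.arcsin (((2*a-C₁)*x - a*C₁)/(C₁*(a-x))))
      (1/(2*q*w/(C₁*(a-u))) * (((2*a-C₁)*(C₁*(a-u)) - ((2*a-C₁)*u - a*C₁)*(-C₁)) / (C₁*(a-u))^2)) u := by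
    have := (Real.hasDerivAt_arcsin hh1 hh2).comp u hinner3
    rwa [hs3] at this
  have total := (hp1.neg.add (hp2.const_mul (a-C₁/2))).sub (hp3.const_mul q)
  refine total.congr_deriv (Eq.symm ?_)
  field_simp
  ring_nf
  linear_combination 2*hw2


theorem stmt0 (C₁ C₂ : ℝ) (hC₁ : 0 < C₁) (hC₂ : 0 < C₂)
    (ξ : ℝ) (hξ : xip C₁ C₂ < ξ) :
    C₂ / (Real.sqrt (ξ * (ξ - C₁)) - C₂) =
      (∫ u in (0:ℝ)..C₁, psi C₁ C₂ u / (ξ - u)) + rres C₁ C₂ / (ξ - xip C₁ C₂) := by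
  set Dd := Real.sqrt (C₁^2 + 4*C₂^2) with hDd
  have hD2 : Dd^2 = C₁^2 + 4*C₂^2 := Real.sq_sqrt (by positivity)
  have hDpos : 0 < Dd := Real.sqrt_pos.mpr (by positivity)
  have hDC : C₁ < Dd := by nlinarith
  set ξp := xip C₁ C₂ with hξpdef
  have hxp : ξp = (C₁ + Dd)/2 := by rw [hξpdef, hDd]; rfl
  set ξm := (C₁ - Dd)/2 with hξm
  have hxpC : C₁ < ξp := by rw [hxp]; linarith
  have hxppos : 0 < ξp := lt_trans hC₁ hxpC
  have hxmneg : ξm < 0 := by rw [hξm]; linarith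
  have hξC : C₁ < ξ := lt_trans hxpC hξ
  have hξpos : 0 < ξ := lt_trans hC₁ hξC
  set s := Real.sqrt (ξ*(ξ-C₁)) with hs
  have hs2 : s^2 = ξ*(ξ-C₁) := Real.sq_sqrt (by nlinarith)
  have hspos : 0 < s := Real.sqrt_pos.mpr (by nlinarith)
  have hxpp : ξp*(ξp-C₁) = C₂^2 := by rw [hxp]; linear_combination (1/4)*hD2
  have hsC2 : C₂ < s := by
    have h1 : C₂^2 < ξ*(ξ-C₁) := by rw [← hxpp]; nlinarith
    nlinarith
  have hsm : s - C₂ ≠ 0 := ne_of_gt (by linarith)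
  have hr : rres C₁ C₂ = 2*C₂^2/Dd := by
    rw [rres, ← hξpdef, hxpp, Real.sqrt_sq hC₂.le, hxp]
    rw [show 2*((C₁+Dd)/2) - C₁ = Dd by ring]
    ring
  have hAne : ξ - ξp ≠ 0 := ne_of_gt (by linarith)
  have hBpos : 0 < ξ - ξm := by linarith
  have hBne : ξ - ξm ≠ 0 := ne_of_gt hBpos
  have hpm : ξp - ξm = Dd := by rw [hxp, hξm]; ring
  have hpmne : ξp - ξm ≠ 0 := by rw [hpm]; exact hDpos.ne'
  have hsum : ξp + ξm = C₁ := by rw [hxp, hξm]; ring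
  have hprod : ξp*ξm = -C₂^2 := by rw [hxp, hξm]; linear_combination (-(1:ℝ)/4)*hD2
  set α := 1/((ξp-ξm)*(ξ-ξp)) with hα
  set β := 1/((ξp-ξm)*(ξ-ξm)) with hβ
  set γ := -1/((ξ-ξp)*(ξ-ξm)) with hγ
  set Φ := fun x : ℝ => C₂/Real.pi *
    (α * FF C₁ ξp C₂ x - β * FF C₁ ξm (-C₂) x + γ * FF C₁ ξ s x) with hΦ
  have hq1 : C₂^2 = ξp*(ξp-C₁) := hxpp.symm
  have hqa1 : 0 < C₂*ξp := mul_pos hC₂ hxppos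
  have hq2 : (-C₂)^2 = ξm*(ξm-C₁) := by rw [hξm]; linear_combination (-(1:ℝ)/4)*hD2
  have hqa2 : 0 < (-C₂)*ξm := mul_pos_of_neg_of_neg (by linarith) hxmneg
  have hqa3 : 0 < s*ξ := mul_pos hspos hξpos
  have hπ := Real.pi_ne_zero
  clear_value s ξm ξp Dd
  have hderiv : ∀ u ∈ Set.Ioo (0:ℝ) C₁, HasDerivAt Φ (psi C₁ C₂ u / (ξ - u)) u := by
    intro u hu
    obtain ⟨hu0, huC⟩ := hu
    have d1 := FF_deriv hC₁ hq1 hqa1 hu0 huC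
    have d2 := FF_deriv hC₁ hq2 hqa2 hu0 huC
    have d3 := FF_deriv hC₁ hs2 hqa3 hu0 huC
    have total := (((d1.const_mul α).sub (d2.const_mul β)).add
      (d3.const_mul γ)).const_mul (C₂/Real.pi)
    refine total.congr_deriv (Eq.symm ?_)
    have hfac : C₂^2 + u*(C₁-u) = (ξp-u)*(u-ξm) := by
      linear_combination (-u)*hsum + hprod
    have hup : ξp - u ≠ 0 := ne_of_gt (by linarith)
    have hum : ξm - u ≠ 0 := ne_of_lt (by linarith)
    have huξ : ξ - u ≠ 0 := ne_of_gt (by linarith)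
    have hum' : u - ξm ≠ 0 := by intro h; apply hum; linarith [sub_eq_zero.mp h]
    rw [psi, hfac, hα, hβ, hγ]
    field_simp
    ring
  have hcont : ContinuousOn Φ (Set.Icc 0 C₁) := by
    rw [hΦ]
    apply ContinuousOn.mul continuousOn_const
    apply ContinuousOn.add
    · apply ContinuousOn.sub
      · exact continuousOn_const.mul (FF_cont hC₁ (fun x hx => ne_of_gt (by linarith [hx.2])))
      · exact continuousOn_const.mul (FF_cont hC₁ (fun x hx => ne_of_lt (by linarith [hx.1])))
    · exact continuousOn_const.mul (FF_cont hC₁ (fun x hx => ne_of_gt (by linarith [hx.2])))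
  have hint : IntervalIntegrable (fun u => psi C₁ C₂ u / (ξ - u))
      MeasureTheory.volume 0 C₁ := by
    apply ContinuousOn.intervalIntegrable
    rw [Set.uIcc_of_le hC₁.le]
    apply ContinuousOn.div
    · unfold psi
      apply ContinuousOn.div (Continuous.continuousOn (by fun_prop))
        (Continuous.continuousOn (by fun_prop))
      intro x hx
      have h1 : 0 ≤ x*(C₁-x) := mul_nonneg hx.1 (by linarith [hx.2])
      have : 0 < C₂^2 + x*(C₁-x) := by positivity
      positivity
    · exact Continuous.continuousOn (by fun_prop)
    · intro x hx; exact ne_of_gt (by linarith [hx.2])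
  have hFTC := intervalIntegral.integral_eq_sub_of_hasDeriv_right_of_le hC₁.le hcont
      (fun x hx => (hderiv x hx).hasDerivWithinAt) hint
  rw [hFTC, hr]
  have e1 := FF_sub (q := C₂) hC₁ hxppos.ne' hxpC.ne'
  have e2 := FF_sub (q := -C₂) hC₁ hxmneg.ne (ne_of_lt (lt_trans hxmneg hC₁))
  have e3 := FF_sub (q := s) hC₁ hξpos.ne' hξC.ne'
  have hval : Φ C₁ - Φ 0 = C₂ * (α*(ξp - C₁/2 - C₂) - β*(ξm - C₁/2 - (-C₂))
      + γ*(ξ - C₁/2 - s)) := by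
    have expand : Φ C₁ - Φ 0 = C₂/Real.pi *
        (α*(FF C₁ ξp C₂ C₁ - FF C₁ ξp C₂ 0) - β*(FF C₁ ξm (-C₂) C₁ - FF C₁ ξm (-C₂) 0)
          + γ*(FF C₁ ξ s C₁ - FF C₁ ξ s 0)) := by
      rw [hΦ]; ring
    rw [expand, e1, e2, e3]
    field_simp
  have hsp : s + C₂ ≠ 0 := ne_of_gt (by linarith)
  have hkey : (ξ-ξp)*(ξ-ξm) = (s-C₂)*(s+C₂) := by
    linear_combination (-ξ)*hsum + hprod - hs2
  rw [hval, hα, hβ, hγ, ← hpm]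
  have expand : C₂ * (1/((ξp-ξm)*(ξ-ξp)) * (ξp - C₁/2 - C₂)
        - 1/((ξp-ξm)*(ξ-ξm)) * (ξm - C₁/2 - -C₂)
        + -1/((ξ-ξp)*(ξ-ξm)) * (ξ - C₁/2 - s)) + 2*C₂^2/(ξp-ξm)/(ξ-ξp)
      = (C₂*(ξp-ξm)*(s+C₂)) / ((ξp-ξm)*((ξ-ξp)*(ξ-ξm))) := by
    field_simp
    ring
  rw [expand, hkey]
  rw [div_eq_div_iff hsm (by exact mul_ne_zero hpmne (mul_ne_zero hsm hsp))]
  ring
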